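/- Uniformity propagates one step in the grabbing particle algorithm: let Φ_0 and Φ_1 be the sets of configurations at times 0 and 1 of the grabbing particle system with arm counts (x_1,...,x_n) summing to n − k (k ≥ 1). Every configuration φ ∈ Φ_1 arises from exactly n configurations in Φ_0 (obtained by pruning the unique complete edge of φ at its right-end and reinserting that vertex among the n − 1 roots), each with transition probability 1/(n−1). Consequently, if the initial state is uniform on Φ_0 then the state at time 1 is uniform on Φ_1. -/

import Mathlib

open scoped ENNReal
open Classical

/-! ### The grabbing particle system

`n` particles are labeled by `Fin n`; particle `i` carries `x i` arms.  The arms are enumerated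
uniformly at random and activated in that order; an activated arm grabs a particle chosen
uniformly at random among the particles that have not been grabbed yet and do not belong to the
cluster of the arm's owner; the grabbed particle becomes the right-end of the new directed
edge.  Particles initially lie on the horizontal axis in a uniformly random order. -/

/-- The arms: arm `a` of particle `i`. -/
def ArmIdx (n : ℕ) (x : Fin n → ℕ) : Type := Σ i : Fin n, Fin (x i)

instance (n : ℕ) (x : Fin n → ℕ) : Fintype (ArmIdx n x) := by unfold ArmIdx; infer_instance
instance (n : ℕ) (x : Fin n → ℕ) : DecidableEq (ArmIdx n x) := by unfold ArmIdx; infer_instance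

/-- Total number of arms. -/
def NArms (n : ℕ) (x : Fin n → ℕ) : ℕ := ∑ i, x i

instance (n : ℕ) (x : Fin n → ℕ) : Nonempty (Fin (NArms n x) ≃ ArmIdx n x) :=
  ⟨Fintype.equivOfCardEq (by rw [Fintype.card_fin]; simp [ArmIdx, NArms])⟩

/-- One step towards the root of the cluster of `v`, given the arm enumeration `e` and the
sequence `g` of particles grabbed by the first `t` arms: the owner of the arm that grabbed `v`,
or `v` itself if `v` has not been grabbed. -/
noncomputable def parentStep {n : ℕ} {x : Fin n → ℕ} (e : Fin (NArms n x) ≃ ArmIdx n x)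
    {t : ℕ} (ht : t ≤ NArms n x) (g : Fin t → Fin n) (v : Fin n) : Fin n :=
  if h : ∃ s : Fin t, g s = v then (e (Fin.castLE ht h.choose)).1 else v

/-- The root of the cluster currently containing `v` (obtained by iterating `parentStep`
`n` times, which suffices since clusters have at most `n` particles). -/
noncomputable def clusterRoot {n : ℕ} {x : Fin n → ℕ} (e : Fin (NArms n x) ≃ ArmIdx n x)
    {t : ℕ} (ht : t ≤ NArms n x) (g : Fin t → Fin n) (v : Fin n) : Fin n :=
  (parentStep e ht g)^[n] v

/-- Running the grabbing dynamics from time `t` onwards, given the arm enumeration `e` and the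
grabs made so far: at each step the active arm grabs a uniformly chosen particle among those
not yet grabbed and not in the cluster of the arm's owner.  (If no particle is available —
which never happens along the actual dynamics — a dummy transition is made.)  The result is
the law of the full sequence of grabbed particles. -/
noncomputable def runGrab {n : ℕ} (x : Fin n → ℕ) (e : Fin (NArms n x) ≃ ArmIdx n x) :
    (t : ℕ) → (ht : t ≤ NArms n x) → (Fin t → Fin n) → PMF (Fin (NArms n x) → Fin n) :=
  fun t ht g =>
    if h : t < NArms n x then
      let owner : Fin n := (e ⟨t, h⟩).1
      let S : Finset (Fin n) := Finset.univ.filter fun v =>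
        (∀ s : Fin t, g s ≠ v) ∧ clusterRoot e ht g owner ≠ v
      if hS : S.Nonempty then
        (PMF.uniformOfFinset S hS).bind fun v => runGrab x e (t + 1) h (Fin.snoc g v)
      else runGrab x e (t + 1) h (Fin.snoc g owner)
    else
      PMF.pure fun s => g (Fin.cast (by omega) s)
termination_by t _ _ => NArms n x - t

/-- The state space recording the randomness of the grabbing particle system with arm counts
`x` : the (uniform) enumeration of the arms, the sequence of grabbed particles (the `t`-th
activated arm, which is also the edge labeled `t`, points from its owner to the particle
`g t`), and the (uniform) initial ordering of the particles on the axis. -/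
def SysSt (n : ℕ) (x : Fin n → ℕ) : Type :=
  (Fin (NArms n x) ≃ ArmIdx n x) × (Fin (NArms n x) → Fin n) × Equiv.Perm (Fin n)

/-- The law of the terminal state of the grabbing particle system with arm counts `x`. -/
noncomputable def sysLaw (n : ℕ) (x : Fin n → ℕ) : PMF (SysSt n x) :=
  (PMF.uniformOfFintype (Fin (NArms n x) ≃ ArmIdx n x)).bind fun e =>
    (PMF.uniformOfFintype (Equiv.Perm (Fin n))).bind fun π =>
      (runGrab x e 0 (Nat.zero_le _) (fun s => s.elim0)).map fun g => (e, g, π)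

namespace GPAux

variable {n : ℕ}

/-- The list of particles left-to-right. -/
def rowL (π : Equiv.Perm (Fin n)) : List (Fin n) := List.ofFn fun pos : Fin n => π.symm pos

noncomputable def remL (π : Equiv.Perm (Fin n)) (v : Fin n) : List (Fin n) :=
  (rowL π).filter fun w => w ≠ v

lemma rowL_length (π : Equiv.Perm (Fin n)) : (rowL π).length = n := by simp [rowL]

lemma rowL_getElem (π : Equiv.Perm (Fin n)) (i : ℕ) (h : i < (rowL π).length) :
    (rowL π)[i] = π.symm ⟨i, by simpa [rowL_length] using h⟩ := by
  simp [rowL]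

lemma rowL_nodup (π : Equiv.Perm (Fin n)) : (rowL π).Nodup := by
  rw [rowL, List.nodup_ofFn]; exact π.symm.injective

lemma rowL_getElem_ne (π : Equiv.Perm (Fin n)) (v : Fin n) {i : ℕ}
    (h : i < (rowL π).length) (hne : i ≠ (π v : ℕ)) : (rowL π)[i] ≠ v := by
  rw [rowL_getElem]
  intro hc
  apply hne
  have : (⟨i, by simpa [rowL_length] using h⟩ : Fin n) = π v := by
    apply π.symm.injective; simp [hc]
  exact congrArg Fin.val this

lemma rowL_decomp (π : Equiv.Perm (Fin n)) (v : Fin n) :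
    rowL π = (rowL π).take (π v) ++ v :: (rowL π).drop ((π v : ℕ) + 1) := by
  have h : (π v : ℕ) < (rowL π).length := by rw [rowL_length]; exact (π v).isLt
  conv_lhs => rw [← List.take_append_drop (π v : ℕ) (rowL π)]
  rw [List.drop_eq_getElem_cons h]
  congr 2
  rw [rowL_getElem]
  simp


lemma remL_eq_append (π : Equiv.Perm (Fin n)) (v : Fin n) :
    remL π v = (rowL π).take (π v) ++ (rowL π).drop ((π v : ℕ) + 1) := by
  rw [remL]
  conv_lhs => rw [rowL_decomp π v]
  rw [List.filter_append, List.filter_cons_of_neg (by simp)]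
  congr 1
  · rw [List.filter_eq_self]
    intro a ha
    obtain ⟨i, hi, rfl⟩ := List.mem_iff_getElem.mp ha
    have hi' : i < (π v : ℕ) := by
      have := hi; rw [List.length_take] at this; omega
    rw [List.getElem_take]
    simpa using rowL_getElem_ne π v (by rw [rowL_length]; have := (π v).isLt; omega) (by omega)
  · rw [List.filter_eq_self]
    intro a ha
    obtain ⟨i, hi, rfl⟩ := List.mem_iff_getElem.mp ha
    have hlt : (π v : ℕ) + 1 + i < (rowL π).length := by
      rw [List.length_drop] at hi; omega
    rw [List.getElem_drop]
    simpa using rowL_getElem_ne π v hlt (by omega)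

lemma remL_length (π : Equiv.Perm (Fin n)) (v : Fin n) : (remL π v).length = n - 1 := by
  rw [remL_eq_append, List.length_append, List.length_take, List.length_drop, rowL_length]
  have := (π v).isLt; omega

lemma take_length (π : Equiv.Perm (Fin n)) (v : Fin n) :
    ((rowL π).take (π v)).length = (π v : ℕ) := by
  rw [List.length_take, rowL_length]; have := (π v).isLt; omega

/-- A permutation in the fiber is determined by the image position of `v`. -/
lemma rowL_eq_of_remL (π : Equiv.Perm (Fin n)) (v : Fin n) :
    rowL π = (remL π v).take (π v) ++ v :: (remL π v).drop (π v) := by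
  set A := (rowL π).take (π v) with hA
  set B := (rowL π).drop ((π v : ℕ) + 1) with hB
  have hAl : A.length = (π v : ℕ) := take_length π v
  have h1 : remL π v = A ++ B := remL_eq_append π v
  have h2 : (remL π v).take (π v) = A := by rw [h1, ← hAl, List.take_left]
  have h3 : (remL π v).drop (π v) = B := by rw [h1, ← hAl, List.drop_left]
  rw [h2, h3]; exact rowL_decomp π v

lemma perm_eq_of_rowL {π π' : Equiv.Perm (Fin n)} (h : rowL π = rowL π') : π = π' := by
  rw [rowL, rowL, List.ofFn_inj] at h
  apply Equiv.ext
  intro z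
  apply π'.symm.injective
  have h2 := congrFun h (π z)
  rw [← h2]
  simp

lemma fiber_inj {π π' : Equiv.Perm (Fin n)} {v : Fin n}
    (h : remL π v = remL π' v) (hv : π v = π' v) : π = π' := by
  apply perm_eq_of_rowL
  rw [rowL_eq_of_remL π v, rowL_eq_of_remL π' v, h, hv]

lemma fiber_surj (v : Fin n) (g : List (Fin n)) (hlen : g.length = n - 1)
    (hnd : (v :: g).Nodup) (j : Fin n) :
    ∃ π : Equiv.Perm (Fin n), π v = j ∧ remL π v = g := by
  have hjle : (j : ℕ) ≤ g.length := by rw [hlen]; have := j.isLt; omega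
  have htl : (g.take j).length = (j : ℕ) := by rw [List.length_take]; omega
  have hMlen : (g.take (j:ℕ) ++ v :: g.drop (j:ℕ)).length = n := by
    rw [List.length_append, List.length_cons, List.length_drop, htl]
    have := j.isLt; omega
  have hMperm : (g.take (j:ℕ) ++ v :: g.drop (j:ℕ)).Perm (v :: g) := by
    have := List.perm_middle (a := v) (l₁ := g.take (j:ℕ)) (l₂ := g.drop (j:ℕ))
    rwa [List.take_append_drop] at this
  have hMnd : (g.take (j:ℕ) ++ v :: g.drop (j:ℕ)).Nodup := (List.Perm.nodup_iff hMperm).mpr hnd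
  have hvg : v ∉ g := (List.nodup_cons.mp hnd).1
  set σ : Fin n → Fin n :=
    fun pos => (g.take (j:ℕ) ++ v :: g.drop (j:ℕ))[(pos : ℕ)]'(by rw [hMlen]; exact pos.isLt)
    with hσ
  have σinj : Function.Injective σ := by
    intro a b hab
    exact Fin.ext ((hMnd.getElem_inj_iff).mp hab)
  let π : Equiv.Perm (Fin n) := (Equiv.ofBijective σ (Finite.injective_iff_bijective.mp σinj)).symm
  have hπsymm : ∀ pos, π.symm pos = σ pos := fun pos => rfl
  have hrow : rowL π = g.take (j:ℕ) ++ v :: g.drop (j:ℕ) := by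
    apply List.ext_getElem (by rw [rowL_length, hMlen])
    intro i h1 h2
    rw [rowL_getElem]
    exact rfl
  have hσj : σ j = v := by
    show (g.take (j:ℕ) ++ v :: g.drop (j:ℕ))[(j : ℕ)]'(by rw [hMlen]; exact j.isLt) = v
    rw [List.getElem_append_right (by omega)]
    simp [htl]
  have hπv : π v = j := by
    have hsj : π.symm j = v := by rw [hπsymm j, hσj]
    rw [← hsj]; simp
  refine ⟨π, hπv, ?_⟩
  rw [remL, hrow, List.filter_append, List.filter_cons_of_neg (by simp)]
  rw [List.filter_eq_self.mpr, List.filter_eq_self.mpr, List.take_append_drop]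
  · intro a ha
    have hag : a ∈ g := List.drop_subset _ _ ha
    simp only [ne_eq, decide_eq_true_eq]
    rintro rfl; exact hvg hag
  · intro a ha
    have hag : a ∈ g := List.take_subset _ _ ha
    simp only [ne_eq, decide_eq_true_eq]
    rintro rfl; exact hvg hag

lemma card_permFiber (v : Fin n) (g : List (Fin n)) (hlen : g.length = n - 1)
    (hnd : (v :: g).Nodup) :
    (Finset.univ.filter fun π : Equiv.Perm (Fin n) => remL π v = g).card = n := by
  have h : (Finset.univ.filter fun π : Equiv.Perm (Fin n) => remL π v = g).card
      = (Finset.univ : Finset (Fin n)).card := by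
    apply Finset.card_bij (fun π _ => π v)
    · intro a ha; exact Finset.mem_univ _
    · intro a ha b hb hab
      rw [Finset.mem_filter] at ha hb
      exact fiber_inj (ha.2.trans hb.2.symm) hab
    · intro j _
      obtain ⟨π, h1, h2⟩ := fiber_surj v g hlen hnd j
      exact ⟨π, Finset.mem_filter.mpr ⟨Finset.mem_univ _, h2⟩, h1⟩
  simpa using h

end GPAux

section OneStep

variable (n : ℕ) (x : Fin n → ℕ)

/-- `Φ₀`: the configurations at time `0` of the grabbing particle system with arm counts `x`:
a uniformly random left-to-right ordering of the `n` particles on the horizontal axis together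
with a uniformly random enumeration of the arms. -/
def Conf0 : Type := Equiv.Perm (Fin n) × (Fin (NArms n x) ≃ ArmIdx n x)

instance : Fintype (Conf0 n x) := by unfold Conf0; infer_instance
instance : Nonempty (Conf0 n x) := by unfold Conf0; infer_instance

/-- The owner of the first arm to be activated. -/
def firstOwner (h0 : 0 < NArms n x) (s₀ : Conf0 n x) : Fin n := (s₀.2 ⟨0, h0⟩).1

/-- The raw data of a configuration at time `1`: the arm enumeration, the particle grabbed by
the first activated arm (which, with its arms, is shifted to the right-end of that arm), and
the left-to-right ordering of the `n - 1` remaining roots on the axis. -/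
def Conf1 : Type := (Fin (NArms n x) ≃ ArmIdx n x) × Fin n × (Fin (n - 1) → Fin n)

instance : Fintype (Conf1 n x) := by unfold Conf1; infer_instance

/-- The transition of the grabbing particle system at time `1`: from the initial configuration
`s₀`, the first activated arm grabs the particle `v`, which is removed from the axis; the
remaining roots keep their relative order. -/
noncomputable def applyGrab (s₀ : Conf0 n x) (v : Fin n) : Conf1 n x :=
  (s₀.2, v, fun i => ((List.ofFn fun pos : Fin n => s₀.1.symm pos).filter fun w => w ≠ v).getD i v)

/-- `Φ₁`: the set of configurations at time `1`, i.e. those reachable from some initial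
configuration by a legitimate first grab (the grabbed particle differs from the grabber). -/
noncomputable def Conf1Reachable (h0 : 0 < NArms n x) : Finset (Conf1 n x) :=
  Finset.univ.filter fun s₁ =>
    ∃ (s₀ : Conf0 n x) (v : Fin n), v ≠ firstOwner n x h0 s₀ ∧ applyGrab n x s₀ v = s₁

lemma conf1Reachable_nonempty (hn : 2 ≤ n) (h0 : 0 < NArms n x) :
    (Conf1Reachable n x h0).Nonempty := by
  haveI : Nontrivial (Fin n) := Fin.nontrivial_iff_two_le.mpr hn
  obtain ⟨s₀⟩ := (inferInstance : Nonempty (Conf0 n x))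
  obtain ⟨v, hv⟩ := exists_ne (firstOwner n x h0 s₀)
  exact ⟨applyGrab n x s₀ v, by
    simp only [Conf1Reachable, Finset.mem_filter, Finset.mem_univ, true_and]
    exact ⟨s₀, v, hv, rfl⟩⟩

/-- The random transition at time `1`: the first activated arm grabs a particle chosen
uniformly at random among the `n - 1` particles other than its owner, each with probability
`1 / (n - 1)`. -/
noncomputable def stepLaw (hn : 2 ≤ n) (h0 : 0 < NArms n x) (s₀ : Conf0 n x) :
    PMF (Conf1 n x) :=
  PMF.map (applyGrab n x s₀)
    (PMF.uniformOfFinset (Finset.univ.filter fun v => v ≠ firstOwner n x h0 s₀)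
      (by
        haveI : Nontrivial (Fin n) := Fin.nontrivial_iff_two_le.mpr hn
        obtain ⟨v, hv⟩ := exists_ne (firstOwner n x h0 s₀)
        exact ⟨v, by simpa using hv⟩))


namespace GPAux

variable {n : ℕ} {x : Fin n → ℕ}

lemma applyGrab_def (s₀ : Conf0 n x) (v : Fin n) :
    applyGrab n x s₀ v = (s₀.2, v, fun i : Fin (n - 1) => (remL s₀.1 v).getD i v) := rfl

lemma remL_nodup_cons (π : Equiv.Perm (Fin n)) (v : Fin n) : (v :: remL π v).Nodup := by
  rw [List.nodup_cons]
  constructor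
  · intro hv
    rw [remL, List.mem_filter] at hv
    simpa using hv.2
  · exact (rowL_nodup π).filter _

lemma third_iff (π : Equiv.Perm (Fin n)) (v : Fin n) (f : Fin (n - 1) → Fin n) :
    (fun i : Fin (n - 1) => (remL π v).getD i v) = f ↔ remL π v = List.ofFn f := by
  constructor
  · intro h
    apply List.ext_getElem (by rw [remL_length, List.length_ofFn])
    intro i h1 h2
    have hi : i < n - 1 := by rwa [remL_length] at h1
    have := congrFun h ⟨i, hi⟩
    simp only [List.getD_eq_getElem _ _ h1] at this
    rw [this, List.getElem_ofFn]
  · intro h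
    funext i
    rw [h]
    have hi : (i : ℕ) < (List.ofFn f).length := by simp [i.isLt]
    rw [List.getD_eq_getElem _ _ hi, List.getElem_ofFn]

lemma applyGrab_eq_iff (s₀ : Conf0 n x) (v : Fin n) (s₁ : Conf1 n x) :
    applyGrab n x s₀ v = s₁ ↔ s₀.2 = s₁.1 ∧ v = s₁.2.1 ∧ remL s₀.1 v = List.ofFn s₁.2.2 := by
  rw [applyGrab_def]
  exact Iff.trans Prod.ext_iff (and_congr Iff.rfl
    (Iff.trans Prod.ext_iff (and_congr Iff.rfl (third_iff s₀.1 v s₁.2.2))))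


lemma fiber0_card (h0 : 0 < NArms n x) (s₁ : Conf1 n x) (hs₁ : s₁ ∈ Conf1Reachable n x h0) :
    (Finset.univ.filter fun s₀ : Conf0 n x =>
      ∃ v : Fin n, v ≠ firstOwner n x h0 s₀ ∧ applyGrab n x s₀ v = s₁).card = n := by
  simp only [Conf1Reachable, Finset.mem_filter, Finset.mem_univ, true_and] at hs₁
  obtain ⟨s₀', v₀, hv₀, happ⟩ := hs₁
  rw [applyGrab_eq_iff] at happ
  obtain ⟨he, hv, hrem⟩ := happ
  have hg_len : (List.ofFn s₁.2.2).length = n - 1 := by simp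
  have hg_nd : (s₁.2.1 :: List.ofFn s₁.2.2).Nodup := by
    rw [← hrem, ← hv]; exact remL_nodup_cons _ _
  have hcard := card_permFiber s₁.2.1 (List.ofFn s₁.2.2) hg_len hg_nd
  have hbij : (Finset.univ.filter fun s₀ : Conf0 n x =>
      ∃ v : Fin n, v ≠ firstOwner n x h0 s₀ ∧ applyGrab n x s₀ v = s₁).card
      = (Finset.univ.filter fun π : Equiv.Perm (Fin n) =>
          remL π s₁.2.1 = List.ofFn s₁.2.2).card := by
    apply Finset.card_bij (fun s₀ _ => s₀.1)
    · intro a ha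
      rw [Finset.mem_filter] at ha
      obtain ⟨-, v, hv', ha'⟩ := ha
      rw [applyGrab_eq_iff] at ha'
      refine Finset.mem_filter.mpr ⟨Finset.mem_univ _, ?_⟩
      rw [← ha'.2.1]
      exact ha'.2.2
    · intro a ha b hb hab
      rw [Finset.mem_filter] at ha hb
      obtain ⟨-, va, hva, ha'⟩ := ha
      obtain ⟨-, vb, hvb, hb'⟩ := hb
      rw [applyGrab_eq_iff] at ha' hb'
      exact Prod.ext hab (ha'.1.trans hb'.1.symm)
    · intro π hπ
      rw [Finset.mem_filter] at hπ
      refine ⟨(π, s₁.1), Finset.mem_filter.mpr ⟨Finset.mem_univ _, s₁.2.1, ?_, ?_⟩, rfl⟩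
      · have hfo : firstOwner n x h0 s₀' = firstOwner n x h0 (π, s₁.1) := by
          show (s₀'.2 ⟨0, h0⟩).1 = (s₁.1 ⟨0, h0⟩).1
          rw [he]
        rw [← hv, ← hfo]
        exact hv₀
      · refine (applyGrab_eq_iff (x := x) (π, s₁.1) s₁.2.1 s₁).mpr ?_
        exact ⟨rfl, rfl, hπ.2⟩
  rw [hbij, hcard]

lemma cardv_eq (h0 : 0 < NArms n x) (s₀ : Conf0 n x) (s₁ : Conf1 n x) :
    (Finset.univ.filter fun v : Fin n =>
        v ≠ firstOwner n x h0 s₀ ∧ applyGrab n x s₀ v = s₁).card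
      = if (∃ v : Fin n, v ≠ firstOwner n x h0 s₀ ∧ applyGrab n x s₀ v = s₁) then 1 else 0 := by
  split_ifs with h
  · obtain ⟨v, hv, ha⟩ := h
    have hset : (Finset.univ.filter fun w : Fin n =>
        w ≠ firstOwner n x h0 s₀ ∧ applyGrab n x s₀ w = s₁) = {v} := by
      ext w
      simp only [Finset.mem_filter, Finset.mem_univ, true_and, Finset.mem_singleton]
      constructor
      · rintro ⟨hw1, hw2⟩
        have h2 : (applyGrab n x s₀ w).2.1 = (applyGrab n x s₀ v).2.1 := by rw [hw2, ha]
        exact h2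
      · rintro rfl; exact ⟨hv, ha⟩
    rw [hset]
    exact Finset.card_singleton v
  · rw [Finset.card_eq_zero, Finset.filter_eq_empty_iff]
    intro w _ hc
    exact h ⟨w, hc⟩

lemma card_vchoices (h0 : 0 < NArms n x) (s₀ : Conf0 n x) :
    (Finset.univ.filter fun v : Fin n => v ≠ firstOwner n x h0 s₀).card = n - 1 := by
  rw [Finset.filter_ne', Finset.card_erase_of_mem (Finset.mem_univ _)]
  simp

lemma sum_cardv (h0 : 0 < NArms n x) (s₁ : Conf1 n x) :
    ∑ s₀ : Conf0 n x, (Finset.univ.filter fun v : Fin n =>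
        v ≠ firstOwner n x h0 s₀ ∧ applyGrab n x s₀ v = s₁).card
      = (Finset.univ.filter fun s₀ : Conf0 n x =>
          ∃ v : Fin n, v ≠ firstOwner n x h0 s₀ ∧ applyGrab n x s₀ v = s₁).card := by
  rw [Finset.card_filter]
  exact Finset.sum_congr rfl fun s₀ _ => cardv_eq h0 s₀ s₁

lemma double_count (h0 : 0 < NArms n x) :
    Fintype.card (Conf0 n x) * (n - 1) = (Conf1Reachable n x h0).card * n := by
  have h1 : ∀ s₀ : Conf0 n x,
      (Finset.univ.filter fun v : Fin n => v ≠ firstOwner n x h0 s₀).card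
        = ∑ s₁ ∈ Conf1Reachable n x h0,
            (Finset.univ.filter fun v : Fin n =>
              v ≠ firstOwner n x h0 s₀ ∧ applyGrab n x s₀ v = s₁).card := by
    intro s₀
    rw [Finset.card_eq_sum_card_fiberwise (f := fun v => applyGrab n x s₀ v)
      (t := Conf1Reachable n x h0) ?_]
    · exact Finset.sum_congr rfl fun s₁ _ => by rw [Finset.filter_filter]
    · intro v hv
      rw [Finset.mem_coe, Finset.mem_filter] at hv
      simp only [Finset.mem_coe, Conf1Reachable, Finset.mem_filter, Finset.mem_univ, true_and]
      exact ⟨s₀, v, hv.2, rfl⟩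
  calc Fintype.card (Conf0 n x) * (n - 1)
      = ∑ _s₀ : Conf0 n x, (n - 1) := by
        rw [Finset.sum_const, Finset.card_univ, smul_eq_mul]
    _ = ∑ s₀ : Conf0 n x, ∑ s₁ ∈ Conf1Reachable n x h0,
          (Finset.univ.filter fun v : Fin n =>
            v ≠ firstOwner n x h0 s₀ ∧ applyGrab n x s₀ v = s₁).card := by
        exact Finset.sum_congr rfl fun s₀ _ => by rw [← h1 s₀, card_vchoices h0 s₀]
    _ = ∑ s₁ ∈ Conf1Reachable n x h0, ∑ s₀ : Conf0 n x,
          (Finset.univ.filter fun v : Fin n =>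
            v ≠ firstOwner n x h0 s₀ ∧ applyGrab n x s₀ v = s₁).card := Finset.sum_comm
    _ = ∑ s₁ ∈ Conf1Reachable n x h0, n := by
        refine Finset.sum_congr rfl fun s₁ hs₁ => ?_
        rw [sum_cardv h0 s₁, fiber0_card h0 s₁ hs₁]
    _ = (Conf1Reachable n x h0).card * n := by
        rw [Finset.sum_const, smul_eq_mul]

lemma stepLaw_apply (hn : 2 ≤ n) (h0 : 0 < NArms n x) (s₀ : Conf0 n x) (s₁ : Conf1 n x) :
    stepLaw n x hn h0 s₀ s₁
      = ((Finset.univ.filter fun v : Fin n =>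
            v ≠ firstOwner n x h0 s₀ ∧ applyGrab n x s₀ v = s₁).card : ℝ≥0∞)
          * (((n - 1 : ℕ) : ℝ≥0∞))⁻¹ := by
  rw [stepLaw, PMF.map_apply, tsum_fintype]
  have hT := card_vchoices h0 s₀
  calc (∑ v : Fin n, if s₁ = applyGrab n x s₀ v then
          (PMF.uniformOfFinset (Finset.univ.filter fun v => v ≠ firstOwner n x h0 s₀) _) v else 0)
      = ∑ v : Fin n, (if v ≠ firstOwner n x h0 s₀ ∧ applyGrab n x s₀ v = s₁
          then (((n - 1 : ℕ) : ℝ≥0∞))⁻¹ else 0) := by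
        refine Finset.sum_congr rfl fun v _ => ?_
        rw [PMF.uniformOfFinset_apply, hT]
        simp only [Finset.mem_filter, Finset.mem_univ, true_and]
        by_cases h1 : applyGrab n x s₀ v = s₁
        · rw [if_pos h1.symm]
          by_cases h2 : v ≠ firstOwner n x h0 s₀
          · rw [if_pos h2, if_pos ⟨h2, h1⟩]
          · rw [if_neg h2, if_neg (fun hc => h2 hc.1)]
        · rw [if_neg (fun hc => h1 hc.symm), if_neg (fun hc => h1 hc.2)]
    _ = ∑ v ∈ (Finset.univ.filter fun v : Fin n =>
          v ≠ firstOwner n x h0 s₀ ∧ applyGrab n x s₀ v = s₁), (((n - 1 : ℕ) : ℝ≥0∞))⁻¹ :=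
        (Finset.sum_filter _ _).symm
    _ = _ := by rw [Finset.sum_const, nsmul_eq_mul]


end GPAux

/-- Uniformity propagates one step in the grabbing particle algorithm:
every configuration `s₁ ∈ Φ₁` arises from exactly `n` configurations in `Φ₀` (each transition
having probability `1/(n-1)`, as recorded in `stepLaw`); consequently, if the initial state is
uniform on `Φ₀` then the state at time `1` is uniform on `Φ₁`. -/
theorem one_step_uniformity
    (k : ℕ) (hn : 2 ≤ n) (hk : 1 ≤ k) (hkn : k < n)
    (hsum : ∑ i, x i = n - k) (h0 : 0 < NArms n x) :
    (∀ s₁ ∈ Conf1Reachable n x h0,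
      (Finset.univ.filter fun s₀ : Conf0 n x =>
        ∃ v : Fin n, v ≠ firstOwner n x h0 s₀ ∧ applyGrab n x s₀ v = s₁).card = n) ∧
    (PMF.uniformOfFintype (Conf0 n x)).bind (stepLaw n x hn h0)
      = PMF.uniformOfFinset (Conf1Reachable n x h0) (conf1Reachable_nonempty n x hn h0) := by
  constructor
  · intro s₁ hs₁
    exact GPAux.fiber0_card h0 s₁ hs₁
  · apply PMF.ext
    intro s₁
    rw [PMF.bind_apply, tsum_fintype, PMF.uniformOfFinset_apply]
    have hstep : ∀ s₀ : Conf0 n x,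
        (PMF.uniformOfFintype (Conf0 n x)) s₀ * (stepLaw n x hn h0 s₀) s₁
          = ((Fintype.card (Conf0 n x) : ℝ≥0∞))⁻¹ * ((((n - 1 : ℕ) : ℝ≥0∞))⁻¹ *
              ((Finset.univ.filter fun v : Fin n =>
                v ≠ firstOwner n x h0 s₀ ∧ applyGrab n x s₀ v = s₁).card : ℝ≥0∞)) := by
      intro s₀
      rw [PMF.uniformOfFintype_apply, GPAux.stepLaw_apply hn h0 s₀ s₁]
      ring
    rw [Finset.sum_congr rfl fun s₀ _ => hstep s₀, ← Finset.mul_sum, ← Finset.mul_sum]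
    have hsum : ∑ s₀ : Conf0 n x,
        ((Finset.univ.filter fun v : Fin n =>
            v ≠ firstOwner n x h0 s₀ ∧ applyGrab n x s₀ v = s₁).card : ℝ≥0∞)
        = ((Finset.univ.filter fun s₀ : Conf0 n x =>
            ∃ v : Fin n, v ≠ firstOwner n x h0 s₀ ∧ applyGrab n x s₀ v = s₁).card : ℝ≥0∞) := by
      rw [← Nat.cast_sum]
      exact congrArg _ (GPAux.sum_cardv h0 s₁)
    rw [hsum]
    by_cases hs : s₁ ∈ Conf1Reachable n x h0
    · rw [if_pos hs, GPAux.fiber0_card h0 s₁ hs]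
      -- arithmetic
      have hdc := GPAux.double_count (n := n) (x := x) h0
      set a : ℝ≥0∞ := (Fintype.card (Conf0 n x) : ℝ≥0∞) with ha
      set b : ℝ≥0∞ := ((n - 1 : ℕ) : ℝ≥0∞) with hb
      set P : ℝ≥0∞ := ((Conf1Reachable n x h0).card : ℝ≥0∞) with hP
      have key : a * b = P * (n : ℝ≥0∞) := by
        rw [ha, hb, hP]
        exact_mod_cast congrArg (Nat.cast : ℕ → ℝ≥0∞) hdc
      have ha0 : a ≠ 0 := by
        rw [ha]; exact_mod_cast Fintype.card_ne_zero
      have hatop : a ≠ ⊤ := by rw [ha]; exact ENNReal.natCast_ne_top _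
      have hb0 : b ≠ 0 := by
        rw [hb]
        simp only [ne_eq, Nat.cast_eq_zero]
        omega
      have hbtop : b ≠ ⊤ := by rw [hb]; exact ENNReal.natCast_ne_top _
      have hP0 : P ≠ 0 := by
        rw [hP]
        simp only [ne_eq, Nat.cast_eq_zero]
        exact Finset.card_ne_zero_of_mem hs
      have hPtop : P ≠ ⊤ := by rw [hP]; exact ENNReal.natCast_ne_top _
      have hN0 : (n : ℝ≥0∞) ≠ 0 := by
        simp only [ne_eq, Nat.cast_eq_zero]; omega
      have hNtop : (n : ℝ≥0∞) ≠ ⊤ := ENNReal.natCast_ne_top _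
      have step1 : a⁻¹ * (b⁻¹ * (n : ℝ≥0∞)) = (n : ℝ≥0∞) * (a * b)⁻¹ := by
        rw [ENNReal.mul_inv (Or.inl ha0) (Or.inl hatop)]
        ring
      rw [step1, key, ENNReal.mul_inv (Or.inl hP0) (Or.inl hPtop)]
      rw [mul_left_comm, ENNReal.mul_inv_cancel hN0 hNtop, mul_one]
    · rw [if_neg hs]
      have hzero : (Finset.univ.filter fun s₀ : Conf0 n x =>
          ∃ v : Fin n, v ≠ firstOwner n x h0 s₀ ∧ applyGrab n x s₀ v = s₁).card = 0 := by
        rw [Finset.card_eq_zero, Finset.filter_eq_empty_iff]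
        rintro s₀ - ⟨v, hv, ha⟩
        apply hs
        simp only [Conf1Reachable, Finset.mem_filter, Finset.mem_univ, true_and]
        exact ⟨s₀, v, hv, ha⟩
      rw [hzero]
      simp

end OneStep
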